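/- Mirror-Prox master lemma: Let μ̃ ∈ M(Z), let h, h' : Z → ℝ be bounded measurable, let η > 0, and set μ = MD_η(μ̃, h) and μ̃₊ = MD_η(μ̃, h'). Then for every μ⋆ ∈ M(Z) with KL(μ⋆‖μ̃) < ∞: η (∫_Z h' dμ − ∫_Z h' dμ⋆) ≤ KL(μ⋆‖μ̃) − KL(μ⋆‖μ̃₊) + (η²/2) ‖h − h'‖∞² − 2 dTV(μ, μ̃)². -/

import Mathlib

open MeasureTheory Real ENNReal

namespace Paper

noncomputable section

/-- Total variation distance between two measures:
`dTV(μ,μ') = sup over measurable A of |μ(A) − μ'(A)|`. -/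
def tvDist {E : Type*} [MeasurableSpace E] (μ μ' : Measure E) : ℝ :=
  ⨆ A : {A : Set E // MeasurableSet A}, |(μ A.1).toReal - (μ' A.1).toReal|

/-- Essential supremum of `|h|` on `Z` with respect to Lebesgue measure. -/
def supNormOn {d : ℕ} (Z : Set (Fin d → ℝ)) (h : (Fin d → ℝ) → ℝ) : ℝ :=
  (essSup (fun z => ENNReal.ofReal |h z|) (volume.restrict Z)).toReal

/-- `μ ∈ M(Z)`: a Borel probability measure on `Z`, absolutely continuous w.r.t.
Lebesgue measure restricted to `Z`, with (a.e. on `Z`) positive density `ρ`. -/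
def IsDensityMeasure {d : ℕ} (Z : Set (Fin d → ℝ)) (μ : Measure (Fin d → ℝ))
    (ρ : (Fin d → ℝ) → ℝ) : Prop :=
  IsProbabilityMeasure μ ∧ Measurable ρ ∧
    (∀ᵐ z ∂(volume.restrict Z), 0 < ρ z) ∧
    μ = (volume.restrict Z).withDensity (fun z => ENNReal.ofReal (ρ z))

/-- Entropic mirror-descent update `MD_η(μ, h)` for `μ` with density `ρ` on `Z`:
the probability measure with density `ρ e^{−ηh} / ∫_Z ρ e^{−ηh}`. -/
def MDmeas {d : ℕ} (Z : Set (Fin d → ℝ)) (η : ℝ) (ρ h : (Fin d → ℝ) → ℝ) :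
    Measure (Fin d → ℝ) :=
  (volume.restrict Z).withDensity
    (fun z => ENNReal.ofReal
      (ρ z * Real.exp (-η * h z) / ∫ y in Z, ρ y * Real.exp (-η * h y)))

/-- Gibbs measure on `Z` with density `e^h / ∫_Z e^h` w.r.t. Lebesgue measure. -/
def gibbsMeasure {d : ℕ} (Z : Set (Fin d → ℝ)) (h : (Fin d → ℝ) → ℝ) :
    Measure (Fin d → ℝ) :=
  (volume.restrict Z).withDensity
    (fun z => ENNReal.ofReal (Real.exp (h z) / ∫ y in Z, Real.exp (h y)))

/-- Log-partition functional `Φ*(h) = log ∫_Z e^h dz`. -/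
def logPart {d : ℕ} (Z : Set (Fin d → ℝ)) (h : (Fin d → ℝ) → ℝ) : ℝ :=
  Real.log (∫ z in Z, Real.exp (h z))

/-- Dual Bregman divergence `D*(h,h') = Φ*(h) − Φ*(h') − ∫_Z (h−h') dGibbs(h')`. -/
def dualBregman {d : ℕ} (Z : Set (Fin d → ℝ)) (h h' : (Fin d → ℝ) → ℝ) : ℝ :=
  logPart Z h - logPart Z h' - ∫ z, (h z - h' z) ∂(gibbsMeasure Z h')

/-- Payoff operator `(Gν)(w) = ∫_Θ K(w,θ) dν(θ)`. -/
def Gop {p q : ℕ} (K : (Fin p → ℝ) → (Fin q → ℝ) → ℝ) (ν : Measure (Fin q → ℝ))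
    (w : Fin p → ℝ) : ℝ :=
  ∫ θ, K w θ ∂ν

/-- Adjoint payoff operator `(G†μ)(θ) = ∫_W K(w,θ) dμ(w)`. -/
def Gadj {p q : ℕ} (K : (Fin p → ℝ) → (Fin q → ℝ) → ℝ) (μ : Measure (Fin p → ℝ))
    (θ : Fin q → ℝ) : ℝ :=
  ∫ w, K w θ ∂μ

/-- Mixed-strategy game value `F(μ,ν) = ⟨μ,g⟩ − ⟨μ,Gν⟩`. -/
def payoff {p q : ℕ} (g : (Fin p → ℝ) → ℝ) (K : (Fin p → ℝ) → (Fin q → ℝ) → ℝ)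
    (μ : Measure (Fin p → ℝ)) (ν : Measure (Fin q → ℝ)) : ℝ :=
  (∫ w, g w ∂μ) - ∫ w, Gop K ν w ∂μ


lemma Dpos (p : ℝ) (hp0 : 0 ≤ p) (hp1 : p ≤ 1) (t : ℝ) :
    0 < p * Real.exp t + (1-p) * Real.exp (-t) := by
  rcases eq_or_lt_of_le hp0 with h | h
  · simp [← h]
    nlinarith [Real.exp_pos (-t)]
  · have h1 : 0 < p * Real.exp t := mul_pos h (Real.exp_pos t)
    have h2 : 0 ≤ (1-p) * Real.exp (-t) := mul_nonneg (by linarith) (Real.exp_pos (-t)).le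
    linarith

lemma D_hasDeriv (p : ℝ) (t : ℝ) :
    HasDerivAt (fun t => p * Real.exp t + (1-p) * Real.exp (-t))
      (p * Real.exp t - (1-p) * Real.exp (-t)) t := by
  have h1 : HasDerivAt (fun t => p * Real.exp t) (p * Real.exp t) t :=
    (Real.hasDerivAt_exp t).const_mul p
  have h2 : HasDerivAt (fun t : ℝ => Real.exp (-t)) (-Real.exp (-t)) t := by
    simpa [Function.comp_def] using (Real.hasDerivAt_exp (-t)).comp t (hasDerivAt_neg t)
  have h3 : HasDerivAt (fun t : ℝ => (1-p) * Real.exp (-t)) ((1-p) * -Real.exp (-t)) t :=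
    h2.const_mul (1-p)
  exact (h1.add h3).congr_deriv (by ring)

lemma D'_hasDeriv (p : ℝ) (t : ℝ) :
    HasDerivAt (fun t => p * Real.exp t - (1-p) * Real.exp (-t))
      (p * Real.exp t + (1-p) * Real.exp (-t)) t := by
  have h2 : HasDerivAt (fun t : ℝ => Real.exp (-t)) (-Real.exp (-t)) t := by
    simpa [Function.comp_def] using (Real.hasDerivAt_exp (-t)).comp t (hasDerivAt_neg t)
  have := ((Real.hasDerivAt_exp t).const_mul p).sub (h2.const_mul (1-p))
  exact this.congr_deriv (by ring)

lemma phi_le (p : ℝ) (hp0 : 0 ≤ p) (hp1 : p ≤ 1) {t : ℝ} (ht : 0 ≤ t) :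
    (p * Real.exp t - (1-p) * Real.exp (-t)) / (p * Real.exp t + (1-p) * Real.exp (-t))
      ≤ (2*p - 1) + t := by
  set D := fun t => p * Real.exp t + (1-p) * Real.exp (-t) with hD
  set D' := fun t => p * Real.exp t - (1-p) * Real.exp (-t) with hD'
  have hpos : ∀ s, 0 < D s := Dpos p hp0 hp1
  have key : ∀ a b : ℝ, a ≠ 0 → 1 - (a*a - b*b)/a^2 = (b/a)^2 := by
    intro a b ha; field_simp; ring
  set ψ := fun t => t - D' t / D t with hψ
  have hder : ∀ s, HasDerivAt ψ ((D' s / D s)^2) s := by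
    intro s
    have h1 : HasDerivAt (fun t => D' t / D t) ((D s * D s - D' s * D' s) / (D s)^2) s :=
      (D'_hasDeriv p s).div (D_hasDeriv p s) (hpos s).ne'
    have h2 := (hasDerivAt_id s).sub h1
    rw [key (D s) (D' s) (hpos s).ne'] at h2
    exact h2
  have hmono : Monotone ψ := by
    apply monotone_of_deriv_nonneg
    · intro s; exact (hder s).differentiableAt
    · intro s; rw [(hder s).deriv]; positivity
  have h0 := hmono ht
  have hψ0 : ψ 0 = -(2*p - 1) := by
    simp only [hψ, hD, hD', Real.exp_zero, neg_zero]
    norm_num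
    ring
  rw [hψ0] at h0
  have hq : D' t / D t ≤ t + (2*p-1) := by
    simp only [hψ] at h0; linarith
  simpa [hD, hD'] using hq.trans_eq (by ring)

lemma hoeff_core (p : ℝ) (hp0 : 0 ≤ p) (hp1 : p ≤ 1) {B : ℝ} (hB : 0 ≤ B) :
    p * Real.exp B + (1-p) * Real.exp (-B) ≤ Real.exp ((2*p-1)*B + B^2/2) := by
  set D := fun t => p * Real.exp t + (1-p) * Real.exp (-t) with hD
  set D' := fun t => p * Real.exp t - (1-p) * Real.exp (-t) with hD'
  have hpos : ∀ s, 0 < D s := Dpos p hp0 hp1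
  set g := fun t => (2*p-1)*t + t^2/2 - Real.log (D t) with hg
  have hder : ∀ s, HasDerivAt g ((2*p-1) + s - D' s / D s) s := by
    intro s
    have h1 : HasDerivAt (fun t : ℝ => (2*p-1)*t) (2*p-1) s := by
      simpa using (hasDerivAt_id s).const_mul (2*p-1)
    have h2 : HasDerivAt (fun t : ℝ => t^2/2) s s := by
      have := (hasDerivAt_pow 2 s).div_const 2
      simpa using this
    have h3 : HasDerivAt (fun t => Real.log (D t)) (D' s / D s) s :=
      (D_hasDeriv p s).log (hpos s).ne'
    exact (h1.add h2).sub h3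
  have hmono : MonotoneOn g (Set.Ici 0) := by
    apply monotoneOn_of_deriv_nonneg (convex_Ici 0)
    · exact fun s _ => ((hder s).differentiableAt).continuousAt.continuousWithinAt
    · exact fun s _ => ((hder s).differentiableAt).differentiableWithinAt
    · intro s hs
      rw [(hder s).deriv]
      rw [interior_Ici] at hs
      have := phi_le p hp0 hp1 (le_of_lt hs)
      simp only [hD, hD'] at *
      linarith
  have h0 : g 0 ≤ g B := hmono (Set.self_mem_Ici) hB hB
  have hg0 : g 0 = 0 := by
    simp [hg, hD]
  rw [hg0] at h0
  have : Real.log (D B) ≤ (2*p-1)*B + B^2/2 := by simp only [hg] at h0; linarith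
  have := (Real.log_le_iff_le_exp (hpos B)).mp this
  simpa [hD] using this

lemma chord {x M : ℝ} (hM : 0 < M) (hx : |x| ≤ M) :
    Real.exp x ≤ (M + x)/(2*M) * Real.exp M + (1 - (M + x)/(2*M)) * Real.exp (-M) := by
  obtain ⟨hx1, hx2⟩ := abs_le.mp hx
  have hb0 : 0 ≤ (M + x)/(2*M) := div_nonneg (by linarith) (by linarith)
  have ha0 : 0 ≤ 1 - (M + x)/(2*M) := by
    rw [sub_nonneg, div_le_one (by linarith)]; linarith
  have hsum : (1 - (M + x)/(2*M)) + (M + x)/(2*M) = 1 := by ring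
  have := convexOn_exp.2 (Set.mem_univ (-M)) (Set.mem_univ M) ha0 hb0 hsum
  simp only [smul_eq_mul] at this
  have hxe : (1 - (M + x)/(2*M)) * (-M) + (M + x)/(2*M) * M = x := by
    field_simp; ring
  rw [hxe] at this
  linarith

lemma hoeffding_integral {α : Type*} [MeasurableSpace α] {ν : Measure α}
    {w X : α → ℝ} {M : ℝ} (hM : 0 ≤ M)
    (hw0 : 0 ≤ᵐ[ν] w) (hwint : Integrable w ν) (hw1 : ∫ z, w z ∂ν = 1)
    (hX : ∀ᵐ z ∂ν, |X z| ≤ M)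
    (hwX : Integrable (fun z => w z * X z) ν)
    (hwE : Integrable (fun z => w z * Real.exp (X z)) ν) :
    ∫ z, w z * Real.exp (X z) ∂ν ≤ Real.exp ((∫ z, w z * X z ∂ν) + M^2/2) := by
  rcases eq_or_lt_of_le hM with hM0 | hM0
  · -- M = 0 : X = 0 a.e.
    have hX0 : ∀ᵐ z ∂ν, X z = 0 := by
      filter_upwards [hX] with z hz
      rw [← hM0] at hz
      exact abs_eq_zero.mp (le_antisymm hz (abs_nonneg _))
    have h1 : ∫ z, w z * Real.exp (X z) ∂ν = 1 := by
      rw [← hw1]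
      apply integral_congr_ae
      filter_upwards [hX0] with z hz; simp [hz]
    have h2 : ∫ z, w z * X z ∂ν = 0 := by
      rw [show (0:ℝ) = ∫ z, (0:ℝ) ∂ν by simp]
      apply integral_congr_ae
      filter_upwards [hX0] with z hz; simp [hz]
    rw [h1, h2, ← hM0]
    norm_num
  · set S := ∫ z, w z * X z ∂ν with hS
    set c1 := (Real.exp M + Real.exp (-M))/2 with hc1
    set c2 := (Real.exp M - Real.exp (-M))/(2*M) with hc2
    have hSM : |S| ≤ M := by
      have hle : ∀ᵐ z ∂ν, w z * X z ≤ w z * M := by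
        filter_upwards [hw0, hX] with z h1 h2
        exact mul_le_mul_of_nonneg_left ((abs_le.mp h2).2) h1
      have hge : ∀ᵐ z ∂ν, w z * (-M) ≤ w z * X z := by
        filter_upwards [hw0, hX] with z h1 h2
        exact mul_le_mul_of_nonneg_left ((abs_le.mp h2).1) h1
      have h1 : S ≤ ∫ z, w z * M ∂ν := integral_mono_ae hwX (hwint.mul_const M) hle
      have h2 : ∫ z, w z * (-M) ∂ν ≤ S := integral_mono_ae (hwint.mul_const (-M)) hwX hge
      rw [integral_mul_const, hw1] at h1 h2
      rw [abs_le]; constructor <;> linarith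
    have hpoint : ∀ᵐ z ∂ν, w z * Real.exp (X z) ≤ w z * c1 + (w z * X z) * c2 := by
      filter_upwards [hw0, hX] with z h1 h2
      have := chord hM0 h2
      have hch : Real.exp (X z) ≤ c1 + X z * c2 := by
        rw [hc1, hc2]
        have hM2 : (2*M) ≠ 0 := by positivity
        calc Real.exp (X z) ≤ (M + X z)/(2*M) * Real.exp M + (1 - (M + X z)/(2*M)) * Real.exp (-M) := this
        _ = (Real.exp M + Real.exp (-M))/2 + X z * ((Real.exp M - Real.exp (-M))/(2*M)) := by
              field_simp; ring
      calc w z * Real.exp (X z) ≤ w z * (c1 + X z * c2) := mul_le_mul_of_nonneg_left hch h1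
      _ = w z * c1 + (w z * X z) * c2 := by ring
    have hint : ∫ z, w z * Real.exp (X z) ∂ν ≤ ∫ z, (w z * c1 + (w z * X z) * c2) ∂ν :=
      integral_mono_ae hwE ((hwint.mul_const c1).add (hwX.mul_const c2)) hpoint
    rw [integral_add (hwint.mul_const c1) (hwX.mul_const c2), integral_mul_const,
      integral_mul_const, hw1, ← hS] at hint
    set p := (M + S)/(2*M) with hp
    have hp0 : 0 ≤ p := div_nonneg (by have := (abs_le.mp hSM).1; linarith) (by linarith)
    have hp1 : p ≤ 1 := by
      rw [hp, div_le_one (by linarith)]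
      have := (abs_le.mp hSM).2; linarith
    have hcore := hoeff_core p hp0 hp1 hM
    have heq1 : p * Real.exp M + (1-p) * Real.exp (-M) = 1 * c1 + S * c2 := by
      rw [hp, hc1, hc2]; field_simp; ring
    have heq2 : (2*p-1)*M + M^2/2 = S + M^2/2 := by
      rw [hp]; field_simp; ring
    rw [heq1, heq2] at hcore
    linarith


lemma integral_CS {α : Type*} [MeasurableSpace α] {ν : Measure α} {f g : α → ℝ}
    (hf0 : 0 ≤ᵐ[ν] f)
    (hfm : AEStronglyMeasurable f ν) (hgm : AEStronglyMeasurable g ν)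
    (hf2 : Integrable (fun z => f z ^ 2) ν) (hg2 : Integrable (fun z => g z ^ 2) ν) :
    (∫ z, f z * g z ∂ν)^2 ≤ (∫ z, f z ^ 2 ∂ν) * (∫ z, g z ^ 2 ∂ν) := by
  have hfg : Integrable (fun z => f z * g z) ν := by
    apply Integrable.mono' ((hf2.add hg2).div_const 2) (hfm.mul hgm)
    refine Filter.Eventually.of_forall (fun z => ?_)
    simp only [Pi.mul_apply, Pi.add_apply, norm_mul, Real.norm_eq_abs]
    nlinarith [sq_nonneg (|f z| - |g z|), sq_abs (f z), sq_abs (g z), abs_nonneg (f z),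
      abs_nonneg (g z)]
  set A := ∫ z, f z ^ 2 ∂ν with hA
  set Bq := ∫ z, g z ^ 2 ∂ν with hB
  set S := ∫ z, f z * g z ∂ν with hSdef
  have hA0 : 0 ≤ A := integral_nonneg (fun z => sq_nonneg _)
  have hB0 : 0 ≤ Bq := integral_nonneg (fun z => sq_nonneg _)
  rcases eq_or_lt_of_le hA0 with hA1 | hA1
  · have hf20 : (fun z => f z ^ 2) =ᵐ[ν] 0 :=
      (integral_eq_zero_iff_of_nonneg_ae (Filter.Eventually.of_forall fun z => sq_nonneg _)
        hf2).mp hA1.symm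
    have hS0 : S = 0 := by
      rw [hSdef, show (0:ℝ) = ∫ _, (0:ℝ) ∂ν by simp]
      apply integral_congr_ae
      filter_upwards [hf20] with z hz
      have : f z = 0 := by
        have : f z ^ 2 = 0 := hz
        exact pow_eq_zero_iff (n := 2) (by norm_num) |>.mp this
      simp [this]
    rw [hS0]
    simpa using mul_nonneg hA0 hB0
  · set c := S / A with hc
    have hcA : c * A = S := div_mul_cancel₀ S hA1.ne'
    have hkey : 0 ≤ c^2 * A - 2*c*S + Bq := by
      have hexp : ∫ z, (c * f z - g z)^2 ∂ν = c^2 * A - 2*c*S + Bq := by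
        have e1 : ∀ z, (c * f z - g z)^2
            = c^2 * f z ^2 - 2*c*(f z * g z) + g z ^2 := fun z => by ring
        rw [integral_congr_ae (Filter.Eventually.of_forall e1)]
        have hint1 : Integrable (fun a => c^2 * f a ^2 - 2*c*(f a * g a)) ν :=
          (hf2.const_mul (c^2)).sub (hfg.const_mul (2*c))
        rw [integral_add hint1 hg2,
          integral_sub (hf2.const_mul (c^2)) (hfg.const_mul (2*c)),
          integral_const_mul, integral_const_mul]
      rw [← hexp]
      exact integral_nonneg fun z => sq_nonneg _
    nlinarith [hkey, hcA, hA1]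

lemma klterm_nonneg {x : ℝ} (hx : 0 < x) : 0 ≤ x * Real.log x - x + 1 := by
  have h := Real.log_le_sub_one_of_pos (inv_pos.mpr hx)
  rw [Real.log_inv] at h
  have : 1 - 1/x ≤ Real.log x := by
    rw [one_div]; linarith
  have h2 := mul_le_mul_of_nonneg_left this hx.le
  have h3 : x * (1/x) = 1 := by field_simp
  nlinarith

lemma G_sign {x : ℝ} (hx : 0 < x) :
    (1 ≤ x → 0 ≤ (x+1) * Real.log x - 2*(x-1)) ∧
    (x ≤ 1 → (x+1) * Real.log x - 2*(x-1) ≤ 0) := by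
  set G := fun x : ℝ => (x+1) * Real.log x - 2*(x-1) with hG
  have hder : ∀ y : ℝ, 0 < y → HasDerivAt G (Real.log y + 1/y - 1) y := by
    intro y hy
    have h1 : HasDerivAt (fun x : ℝ => (x+1) * Real.log x)
        (1 * Real.log y + (y+1) * y⁻¹) y :=
      ((hasDerivAt_id y).add_const 1).mul (Real.hasDerivAt_log hy.ne')
    have h2 : HasDerivAt (fun x : ℝ => 2*(x-1)) 2 y := by
      simpa using ((hasDerivAt_id y).sub_const 1).const_mul 2
    have := h1.sub h2
    exact this.congr_deriv (by rw [add_mul, one_mul, mul_inv_cancel₀ hy.ne']; ring)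
  have hd0 : ∀ y ∈ interior (Set.Ioi (0:ℝ)), 0 ≤ deriv G y := by
    intro y hy
    rw [interior_Ioi] at hy
    rw [(hder y hy).deriv]
    have h := Real.log_le_sub_one_of_pos (inv_pos.mpr hy)
    rw [Real.log_inv] at h
    have h2 : 1 - 1/y ≤ Real.log y := by rw [one_div]; linarith
    linarith
  have hmono : MonotoneOn G (Set.Ioi 0) := by
    apply monotoneOn_of_deriv_nonneg (convex_Ioi 0)
    · intro y hy
      exact ((hder y hy).differentiableAt).continuousAt.continuousWithinAt
    · intro y hy
      rw [interior_Ioi] at hy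
      exact ((hder y hy).differentiableAt).differentiableWithinAt
    · exact hd0
  have hG1 : G 1 = 0 := by simp [hG]
  constructor
  · intro h1
    have := hmono (Set.mem_Ioi.mpr one_pos) (Set.mem_Ioi.mpr hx) h1
    rw [hG1] at this; exact this
  · intro h1
    have := hmono (Set.mem_Ioi.mpr hx) (Set.mem_Ioi.mpr one_pos) h1
    rw [hG1] at this; exact this

lemma pinsker_scalar {x : ℝ} (hx : 0 < x) :
    3*(x-1)^2 ≤ 2*(x+2)*(x * Real.log x - x + 1) := by
  set F := fun x : ℝ => 2*(x+2)*(x * Real.log x - x + 1) - 3*(x-1)^2 with hF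
  have hder : ∀ y : ℝ, 0 < y → HasDerivAt F (4*((y+1) * Real.log y - 2*(y-1))) y := by
    intro y hy
    have h1 : HasDerivAt (fun x : ℝ => 2*(x+2)) 2 y := by
      simpa using ((hasDerivAt_id y).add_const 2).const_mul 2
    have h2 : HasDerivAt (fun x : ℝ => x * Real.log x - x + 1) (Real.log y) y := by
      have := (Real.hasDerivAt_mul_log hy.ne').sub (hasDerivAt_id y)
      have h3 := this.add_const 1
      exact h3.congr_deriv (by ring)
    have h4 : HasDerivAt (fun x : ℝ => 3*(x-1)^2) (3*(2*(y-1))) y := by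
      have := (((hasDerivAt_id y).sub_const 1).pow 2).const_mul 3
      exact this.congr_deriv (by norm_num)
    have := (h1.mul h2).sub h4
    exact this.congr_deriv (by ring)
  have hF1 : F 1 = 0 := by simp [hF]
  have hFnn : 0 ≤ F x := by
    rcases le_total 1 x with h1 | h1
    · have hmono : MonotoneOn F (Set.Ici 1) := by
        apply monotoneOn_of_deriv_nonneg (convex_Ici 1)
        · intro y hy
          have hy0 : (0:ℝ) < y := lt_of_lt_of_le one_pos hy
          exact ((hder y hy0).differentiableAt).continuousAt.continuousWithinAt
        · intro y hy
          rw [interior_Ici] at hy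
          exact ((hder y (lt_trans one_pos hy)).differentiableAt).differentiableWithinAt
        · intro y hy
          rw [interior_Ici] at hy
          have hy0 : (0:ℝ) < y := lt_trans one_pos hy
          rw [(hder y hy0).deriv]
          have := (G_sign hy0).1 hy.le
          linarith
      have := hmono Set.self_mem_Ici h1 h1
      rw [hF1] at this; exact this
    · have hanti : AntitoneOn F (Set.Ioc 0 1) := by
        apply antitoneOn_of_deriv_nonpos (convex_Ioc 0 1)
        · intro y hy
          exact ((hder y hy.1).differentiableAt).continuousAt.continuousWithinAt
        · intro y hy
          have : y ∈ Set.Ioo (0:ℝ) 1 := by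
            rwa [interior_Ioc] at hy
          exact ((hder y this.1).differentiableAt).differentiableWithinAt
        · intro y hy
          rw [interior_Ioc] at hy
          rw [(hder y hy.1).deriv]
          have := (G_sign hy.1).2 hy.2.le
          linarith
      have := hanti (Set.mem_Ioc.mpr ⟨hx, h1⟩) (Set.mem_Ioc.mpr ⟨one_pos, le_refl 1⟩) h1
      rw [hF1] at this; exact this
  simp only [hF] at hFnn
  linarith

lemma pinsker_point {a b : ℝ} (ha : 0 < a) (hb : 0 < b) :
    (a - b)^2 ≤ (2/3)*(a + 2*b) * (a * Real.log (a/b) - a + b) := by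
  rw [show a/b = a/b from rfl]
  set x := a/b with hxd
  have hx : 0 < x := div_pos ha hb
  have hxb : x * b = a := div_mul_cancel₀ a hb.ne'
  have h := pinsker_scalar hx
  have key := mul_le_mul_of_nonneg_right h (sq_nonneg b)
  have e1 : 3*(x-1)^2 * b^2 = 3*(a-b)^2 := by
    rw [← hxb]; ring
  have e2 : 2*(x+2)*(x * Real.log x - x + 1) * b^2
      = 3 * ((2/3)*(a + 2*b) * (a * Real.log x - a + b)) := by
    rw [← hxb]; ring
  rw [e1, e2] at key
  linarith


lemma integral_pos_of_ae_pos {α : Type*} [MeasurableSpace α] {ν : MeasureTheory.Measure α}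
    {f : α → ℝ} (hν : ν ≠ 0) (hf : ∀ᵐ z ∂ν, 0 < f z)
    (hint : MeasureTheory.Integrable f ν) : 0 < ∫ z, f z ∂ν := by
  rw [MeasureTheory.integral_pos_iff_support_of_nonneg_ae (hf.mono fun z h => h.le) hint]
  rw [pos_iff_ne_zero]
  intro h0
  rw [measure_eq_zero_iff_ae_notMem] at h0
  have hFalse : ∀ᵐ z ∂ν, False := by
    filter_upwards [hf, h0] with z h1 h2
    exact h2 (by simpa [Function.mem_support] using h1.ne')
  rw [Filter.eventually_false_iff_eq_bot, MeasureTheory.ae_eq_bot] at hFalse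
  exact hν hFalse

lemma integral_withDensity_ofReal {α : Type*} [MeasurableSpace α] {ν : MeasureTheory.Measure α}
    {w : α → ℝ} (hw_meas : Measurable w) (hw0 : 0 ≤ᵐ[ν] w) (g : α → ℝ) :
    ∫ z, g z ∂(ν.withDensity (fun z => ENNReal.ofReal (w z))) = ∫ z, w z * g z ∂ν := by
  have he : (fun z => ENNReal.ofReal (w z)) = fun z => ((Real.toNNReal (w z) : NNReal) : ℝ≥0∞) :=
    rfl
  have hm : Measurable fun z => Real.toNNReal (w z) := measurable_real_toNNReal.comp hw_meas
  rw [he, integral_withDensity_eq_integral_smul hm g]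
  apply MeasureTheory.integral_congr_ae
  filter_upwards [hw0] with z hz
  simp [NNReal.smul_def, Real.coe_toNNReal _ hz]

lemma abs_integral_le {α : Type*} [MeasurableSpace α] (ν : MeasureTheory.Measure α) (f : α → ℝ) :
    |∫ z, f z ∂ν| ≤ ∫ z, |f z| ∂ν := by
  simpa [Real.norm_eq_abs] using MeasureTheory.norm_integral_le_integral_norm (μ := ν) f

lemma final_arith (eta Sp Ss Sh K lZh lZh' IX T Bv : ℝ)
    (h1 : lZh' ≤ lZh + IX + (eta*Bv)^2/2) (h2 : IX = eta*Sh - eta*Sp)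
    (h3 : 2*T^2 ≤ -(eta*Sh) - lZh) :
    eta * (Sp - Ss) ≤ K - (K + eta * Ss + lZh') + eta^2/2 * Bv^2 - 2*T^2 := by
  nlinarith [h1, h2, h3]

lemma amgm (a b : ℝ) : a * b ≤ (a^2 + b^2)/2 := by nlinarith [sq_nonneg (a-b)]

lemma klterm_nonneg' {a b : ℝ} (ha : 0 < a) (hb : 0 < b) :
    0 ≤ a * Real.log (a/b) - a + b := by
  rw [show a/b = a/b from rfl]
  set x := a/b with hxd
  have hx : 0 < x := div_pos ha hb
  have hxb : x * b = a := div_mul_cancel₀ a hb.ne'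
  have e : a * Real.log x - a + b = b*(x*Real.log x - x + 1) := by rw [← hxb]; ring
  rw [e]
  exact mul_nonneg hb.le (klterm_nonneg hx)

/-- Mirror-Prox master lemma. -/
theorem mirror_prox_master_lemma
    (d : ℕ) (Z : Set (Fin d → ℝ)) (hZ : MeasurableSet Z)
    (hZ0 : volume Z ≠ 0) (hZfin : volume Z ≠ ⊤)
    (μt : Measure (Fin d → ℝ)) (ρt : (Fin d → ℝ) → ℝ)
    (hμt : IsDensityMeasure Z μt ρt)
    (h h' : (Fin d → ℝ) → ℝ) (hhm : Measurable h) (hh'm : Measurable h')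
    (hbd : ∃ C, ∀ z ∈ Z, |h z| ≤ C) (hbd' : ∃ C, ∀ z ∈ Z, |h' z| ≤ C)
    (η : ℝ) (hη : 0 < η)
    (μ : Measure (Fin d → ℝ)) (hμ : μ = MDmeas Z η ρt h)
    (μtp : Measure (Fin d → ℝ)) (hμtp : μtp = MDmeas Z η ρt h')
    (μstar : Measure (Fin d → ℝ)) (ρstar : (Fin d → ℝ) → ℝ)
    (hμstar : IsDensityMeasure Z μstar ρstar)
    (hKL : IntegrableOn (fun z => ρstar z * Real.log (ρstar z / ρt z)) Z) :
    η * ((∫ z, h' z ∂μ) - ∫ z, h' z ∂μstar)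
      ≤ (∫ z in Z, ρstar z * Real.log (ρstar z / ρt z))
          - (∫ z in Z, ρstar z * Real.log (ρstar z /
              (ρt z * Real.exp (-η * h' z) / ∫ y in Z, ρt y * Real.exp (-η * h' y))))
          + η ^ 2 / 2 * (supNormOn Z (fun z => h z - h' z)) ^ 2
          - 2 * (tvDist μ μt) ^ 2 := by
  obtain ⟨hμt_prob, hρt_meas, hρt_pos, hμt_eq⟩ := hμt
  obtain ⟨hμs_prob, hρs_meas, hρs_pos, hμs_eq⟩ := hμstar
  obtain ⟨C, hC⟩ := hbd
  obtain ⟨C', hC'⟩ := hbd'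
  set ν := volume.restrict Z with hνdef
  have hν0 : ν ≠ 0 := by
    intro h0
    apply hZ0
    have := congrArg (fun m : Measure (Fin d → ℝ) => m Set.univ) h0
    simpa [hνdef, Measure.restrict_apply_univ] using this
  have hmem : ∀ᵐ z ∂ν, z ∈ Z := ae_restrict_mem hZ
  have hCae : ∀ᵐ z ∂ν, |h z| ≤ C := by filter_upwards [hmem] with z hz; exact hC z hz
  have hC'ae : ∀ᵐ z ∂ν, |h' z| ≤ C' := by filter_upwards [hmem] with z hz; exact hC' z hz
  -- masses of the two given densities
  have mass : ∀ (ρ : (Fin d → ℝ) → ℝ), Measurable ρ → (∀ᵐ z ∂ν, 0 < ρ z) →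
      ∀ (m : Measure (Fin d → ℝ)), IsProbabilityMeasure m →
      m = ν.withDensity (fun z => ENNReal.ofReal (ρ z)) →
      Integrable ρ ν ∧ ∫ z, ρ z ∂ν = 1 := by
    intro ρ hm hpos m hprob heq
    have h1 : ∫⁻ z, ENNReal.ofReal (ρ z) ∂ν = 1 := by
      have h2 := hprob.measure_univ
      rw [heq, withDensity_apply _ MeasurableSet.univ, Measure.restrict_univ] at h2
      exact h2
    have hfin : HasFiniteIntegral ρ ν := by
      rw [hasFiniteIntegral_iff_ofReal (hpos.mono fun z hh => hh.le), h1]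
      exact ENNReal.one_lt_top
    have hint : Integrable ρ ν := ⟨hm.aestronglyMeasurable, hfin⟩
    refine ⟨hint, ?_⟩
    rw [integral_eq_lintegral_of_nonneg_ae (hpos.mono fun z hh => hh.le)
      hm.aestronglyMeasurable, h1]
    simp
  obtain ⟨hρt_int, hρt_one⟩ := mass ρt hρt_meas hρt_pos μt hμt_prob hμt_eq
  obtain ⟨hρs_int, hρs_one⟩ := mass ρstar hρs_meas hρs_pos μstar hμs_prob hμs_eq
  have hρs0 : 0 ≤ᵐ[ν] ρstar := hρs_pos.mono fun z hh => hh.le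
  have hρt0 : 0 ≤ᵐ[ν] ρt := hρt_pos.mono fun z hh => hh.le
  -- normalization constants
  set Zh := ∫ y, ρt y * Real.exp (-η * h y) ∂ν with hZhdef
  set Zh' := ∫ y, ρt y * Real.exp (-η * h' y) ∂ν with hZh'def
  have exp_bound : ∀ (g : (Fin d → ℝ) → ℝ) (Cg : ℝ), Measurable g → (∀ᵐ z ∂ν, |g z| ≤ Cg) →
      Integrable (fun z => ρt z * Real.exp (-η * g z)) ν := by
    intro g Cg hgm hgae
    apply Integrable.mono' (hρt_int.const_mul (Real.exp (η * Cg)))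
      ((hρt_meas.mul (measurable_exp.comp (hgm.const_mul (-η)))).aestronglyMeasurable)
    filter_upwards [hρt_pos, hgae] with z h1 h2
    simp only [Pi.mul_apply, Function.comp_apply]
    rw [Real.norm_eq_abs, abs_mul, abs_of_pos h1, abs_of_pos (Real.exp_pos (-η * g z))]
    have h3 : -η * g z ≤ η * Cg := by
      have := neg_abs_le (g z)
      nlinarith [hη.le]
    calc ρt z * Real.exp (-η * g z) ≤ ρt z * Real.exp (η * Cg) :=
          mul_le_mul_of_nonneg_left (Real.exp_le_exp.mpr h3) h1.le
      _ = Real.exp (η * Cg) * ρt z := mul_comm _ _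
  have hint_eh : Integrable (fun z => ρt z * Real.exp (-η * h z)) ν := exp_bound h C hhm hCae
  have hint_eh' : Integrable (fun z => ρt z * Real.exp (-η * h' z)) ν := exp_bound h' C' hh'm hC'ae
  have hZh_pos : 0 < Zh := by
    rw [hZhdef]
    apply integral_pos_of_ae_pos hν0 _ hint_eh
    filter_upwards [hρt_pos] with z hz
    exact mul_pos hz (Real.exp_pos _)
  have hZh'_pos : 0 < Zh' := by
    rw [hZh'def]
    apply integral_pos_of_ae_pos hν0 _ hint_eh'
    filter_upwards [hρt_pos] with z hz
    exact mul_pos hz (Real.exp_pos _)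
  -- the density of μ
  set p := fun z => ρt z * Real.exp (-η * h z) / Zh with hpdef
  have hp_meas : Measurable p :=
    (hρt_meas.mul (measurable_exp.comp (hhm.const_mul (-η)))).div_const Zh
  have hp_pos : ∀ᵐ z ∂ν, 0 < p z := by
    filter_upwards [hρt_pos] with z hz
    exact div_pos (mul_pos hz (Real.exp_pos _)) hZh_pos
  have hp0 : 0 ≤ᵐ[ν] p := hp_pos.mono fun z hh => hh.le
  have hp_int : Integrable p ν := hint_eh.div_const Zh
  have hp_one : ∫ z, p z ∂ν = 1 := by
    rw [hpdef, integral_div, ← hZhdef, div_self hZh_pos.ne']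
  have hμ_eq : μ = ν.withDensity (fun z => ENNReal.ofReal (p z)) := by
    rw [hμ]; rfl
  -- convert the μ and μstar integrals to density form
  have hμint : ∫ z, h' z ∂μ = ∫ z, p z * h' z ∂ν := by
    rw [hμ_eq, integral_withDensity_ofReal hp_meas hp0]
  have hμsint : ∫ z, h' z ∂μstar = ∫ z, ρstar z * h' z ∂ν := by
    rw [hμs_eq, integral_withDensity_ofReal hρs_meas hρs0]
  -- integrability of bounded multiples
  have bdd_mul_int : ∀ (w g : (Fin d → ℝ) → ℝ) (Cg : ℝ), Integrable w ν → (0 ≤ᵐ[ν] w) →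
      Measurable w → Measurable g → (∀ᵐ z ∂ν, |g z| ≤ Cg) →
      Integrable (fun z => w z * g z) ν := by
    intro w g Cg hwint hw0 hwm hgm hgae
    apply Integrable.mono' (hwint.const_mul Cg) ((hwm.mul hgm).aestronglyMeasurable)
    filter_upwards [hw0, hgae] with z h1 h2
    rw [Real.norm_eq_abs, Pi.mul_apply, abs_mul]
    calc |w z| * |g z| = w z * |g z| := by rw [abs_of_nonneg h1]
      _ ≤ w z * Cg := mul_le_mul_of_nonneg_left h2 h1
      _ = Cg * w z := mul_comm _ _
  have hint_ph : Integrable (fun z => p z * h z) ν :=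
    bdd_mul_int p h C hp_int hp0 hp_meas hhm hCae
  have hint_ph' : Integrable (fun z => p z * h' z) ν :=
    bdd_mul_int p h' C' hp_int hp0 hp_meas hh'm hC'ae
  have hint_sh' : Integrable (fun z => ρstar z * h' z) ν :=
    bdd_mul_int ρstar h' C' hρs_int hρs0 hρs_meas hh'm hC'ae
  -- sup norm bound
  set B := supNormOn Z (fun z => h z - h' z) with hBdef
  have hB0 : 0 ≤ B := ENNReal.toReal_nonneg
  have hBae : ∀ᵐ z ∂ν, |h z - h' z| ≤ B := by
    have hle := _root_.ae_le_essSup (μ := ν) (f := fun z => ENNReal.ofReal |h z - h' z|)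
    have htop : essSup (fun z => ENNReal.ofReal |h z - h' z|) ν ≠ ⊤ := by
      have hb : (fun z => ENNReal.ofReal |h z - h' z|) ≤ᵐ[ν]
          (fun _ => ENNReal.ofReal (C + C')) := by
        filter_upwards [hCae, hC'ae] with z h1 h2
        apply ENNReal.ofReal_le_ofReal
        calc |h z - h' z| ≤ |h z| + |h' z| := abs_sub (h z) (h' z)
          _ ≤ C + C' := add_le_add h1 h2
      exact ne_top_of_le_ne_top ENNReal.ofReal_ne_top (essSup_le_of_ae_le _ hb)
    filter_upwards [hle] with z hz
    have h2 := ENNReal.toReal_mono htop hz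
    rwa [ENNReal.toReal_ofReal (abs_nonneg _)] at h2
  -- Step 1 : the KL difference
  have hI2 : ∫ z, ρstar z * Real.log (ρstar z / (ρt z * Real.exp (-η * h' z) / Zh')) ∂ν
      = (∫ z, ρstar z * Real.log (ρstar z / ρt z) ∂ν)
        + η * (∫ z, ρstar z * h' z ∂ν) + Real.log Zh' := by
    have hpt : ∀ᵐ z ∂ν, ρstar z * Real.log (ρstar z / (ρt z * Real.exp (-η * h' z) / Zh'))
        = ρstar z * Real.log (ρstar z / ρt z) + η * (ρstar z * h' z)
          + ρstar z * Real.log Zh' := by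
      filter_upwards [hρt_pos, hρs_pos] with z h1 h2
      have e1 : ρstar z / (ρt z * Real.exp (-η * h' z) / Zh')
          = (ρstar z / ρt z) * Real.exp (η * h' z) * Zh' := by
        rw [show -η * h' z = -(η * h' z) by ring, Real.exp_neg]
        field_simp
      have hne1 : ρstar z / ρt z ≠ 0 := (div_pos h2 h1).ne'
      rw [e1, Real.log_mul (mul_ne_zero hne1 (Real.exp_pos _).ne') hZh'_pos.ne',
        Real.log_mul hne1 (Real.exp_pos _).ne', Real.log_exp]
      ring
    rw [integral_congr_ae hpt]
    have hi1 : Integrable (fun z => ρstar z * Real.log (ρstar z / ρt z)) ν := hKL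
    have hi2 : Integrable (fun z => η * (ρstar z * h' z)) ν := hint_sh'.const_mul η
    have hiA : Integrable (fun z => ρstar z * Real.log (ρstar z / ρt z)
        + η * (ρstar z * h' z)) ν := hi1.add hi2
    have hiB : Integrable (fun z => ρstar z * Real.log Zh') ν := hρs_int.mul_const _
    rw [integral_add hiA hiB, integral_add hi1 hi2, integral_const_mul, integral_mul_const,
      hρs_one, one_mul]
  -- Step 2 : factorization of Zh'
  have hfact_pt : ∀ z, p z * Real.exp (η * (h z - h' z)) = ρt z * Real.exp (-η * h' z) / Zh := by
    intro z
    show ρt z * Real.exp (-η * h z) / Zh * Real.exp (η * (h z - h' z)) = _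
    rw [div_mul_eq_mul_div, mul_assoc, ← Real.exp_add,
      show -η * h z + η * (h z - h' z) = -η * h' z by ring]
  have hfact : ∫ z, p z * Real.exp (η * (h z - h' z)) ∂ν = Zh' / Zh := by
    rw [integral_congr_ae (Filter.Eventually.of_forall hfact_pt), integral_div, ← hZh'def]
  have hint_pX : Integrable (fun z => p z * (η * (h z - h' z))) ν := by
    apply bdd_mul_int p (fun z => η * (h z - h' z)) (η * (C + C')) hp_int hp0 hp_meas
      ((hhm.sub hh'm).const_mul η)
    filter_upwards [hCae, hC'ae] with z h1 h2
    rw [abs_mul, abs_of_pos hη]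
    have h3 : |h z - h' z| ≤ C + C' := le_trans (abs_sub (h z) (h' z)) (add_le_add h1 h2)
    exact mul_le_mul_of_nonneg_left h3 hη.le
  have hint_peX : Integrable (fun z => p z * Real.exp (η * (h z - h' z))) ν :=
    (hint_eh'.div_const Zh).congr (Filter.Eventually.of_forall fun z => (hfact_pt z).symm)
  have hXae : ∀ᵐ z ∂ν, |η * (h z - h' z)| ≤ η * B := by
    filter_upwards [hBae] with z hz
    rw [abs_mul, abs_of_pos hη]
    exact mul_le_mul_of_nonneg_left hz hη.le
  have hhoeff := hoeffding_integral (M := η * B) (by positivity) hp0 hp_int hp_one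
    hXae hint_pX hint_peX
  have hlin : ∫ z, p z * (η * (h z - h' z)) ∂ν
      = η * (∫ z, p z * h z ∂ν) - η * (∫ z, p z * h' z ∂ν) := by
    have he : ∀ z, p z * (η * (h z - h' z)) = η * (p z * h z) - η * (p z * h' z) :=
      fun z => by ring
    rw [integral_congr_ae (Filter.Eventually.of_forall he),
      integral_sub (hint_ph.const_mul η) (hint_ph'.const_mul η),
      integral_const_mul, integral_const_mul]
  have hF4 : Real.log Zh' ≤ Real.log Zh + (∫ z, p z * (η * (h z - h' z)) ∂ν) + (η*B)^2/2 := by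
    have h1 : Zh' = Zh * (Zh'/Zh) := by field_simp
    nth_rewrite 1 [h1]
    rw [Real.log_mul hZh_pos.ne' (div_pos hZh'_pos hZh_pos).ne']
    have h2 : Real.log (Zh'/Zh) ≤ (∫ z, p z * (η * (h z - h' z)) ∂ν) + (η*B)^2/2 := by
      rw [← hfact]
      calc Real.log (∫ z, p z * Real.exp (η * (h z - h' z)) ∂ν)
          ≤ Real.log (Real.exp ((∫ z, p z * (η * (h z - h' z)) ∂ν) + (η*B)^2/2)) :=
            Real.log_le_log (by rw [hfact]; exact div_pos hZh'_pos hZh_pos) hhoeff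
        _ = _ := Real.log_exp _
    linarith
  -- Step 3 : Pinsker
  have hklpt : ∀ᵐ z ∂ν, p z * Real.log (p z / ρt z)
      = -(η * (p z * h z)) - p z * Real.log Zh := by
    filter_upwards [hρt_pos] with z h1
    have e1 : p z / ρt z = Real.exp (-η * h z) / Zh := by
      rw [hpdef]
      field_simp
    rw [e1, Real.log_div (Real.exp_pos _).ne' hZh_pos.ne', Real.log_exp]
    ring
  have hint_plog : Integrable (fun z => p z * Real.log (p z / ρt z)) ν := by
    apply Integrable.congr (f := fun z => -(η * (p z * h z)) - p z * Real.log Zh)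
      (((hint_ph.const_mul η).neg).sub (hp_int.mul_const _))
    filter_upwards [hklpt] with z hz
    exact hz.symm
  have hKLmu : ∫ z, p z * Real.log (p z / ρt z) ∂ν
      = -(η * (∫ z, p z * h z ∂ν)) - Real.log Zh := by
    have hiN : Integrable (fun z => -(η * (p z * h z))) ν := (hint_ph.const_mul η).neg
    have hiM : Integrable (fun z => p z * Real.log Zh) ν := hp_int.mul_const _
    rw [integral_congr_ae hklpt, integral_sub hiN hiM,
      integral_neg, integral_const_mul, integral_mul_const, hp_one, one_mul]
  have hint_diff : Integrable (fun z => p z - ρt z) ν := hp_int.sub hρt_int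
  set L := ∫ z, |p z - ρt z| ∂ν with hLdef
  have hint_absdiff : Integrable (fun z => |p z - ρt z|) ν := hint_diff.abs
  have hL0 : 0 ≤ L := integral_nonneg fun z => abs_nonneg _
  have hmeasA : ∀ (w : (Fin d → ℝ) → ℝ), Measurable w → (0 ≤ᵐ[ν] w) → Integrable w ν →
      ∀ A : Set (Fin d → ℝ), MeasurableSet A →
      ((ν.withDensity (fun z => ENNReal.ofReal (w z))) A).toReal = ∫ z in A, w z ∂ν := by
    intro w hwm hw0 hwint A hA
    rw [withDensity_apply _ hA,
      ← ofReal_integral_eq_lintegral_ofReal hwint.restrict (ae_restrict_of_ae hw0),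
      ENNReal.toReal_ofReal (integral_nonneg_of_ae (ae_restrict_of_ae hw0))]
  have hptA : ∀ A : {A : Set (Fin d → ℝ) // MeasurableSet A},
      |(μ A.1).toReal - (μt A.1).toReal| ≤ L / 2 := by
    rintro ⟨A, hA⟩
    simp only
    rw [hμ_eq, hμt_eq, hmeasA p hp_meas hp0 hp_int A hA, hmeasA ρt hρt_meas hρt0 hρt_int A hA]
    have hsplit : (∫ z in A, (p z - ρt z) ∂ν) + (∫ z in Aᶜ, (p z - ρt z) ∂ν) = 0 := by
      rw [integral_add_compl hA hint_diff, integral_sub hp_int hρt_int, hp_one, hρt_one,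
        sub_self]
    have e1 : (∫ z in A, p z ∂ν) - ∫ z in A, ρt z ∂ν = ∫ z in A, (p z - ρt z) ∂ν :=
      (integral_sub hp_int.restrict hρt_int.restrict).symm
    rw [e1]
    have h2 : |∫ z in A, (p z - ρt z) ∂ν| ≤ ∫ z in A, |p z - ρt z| ∂ν :=
      abs_integral_le _ _
    have h3 : |∫ z in Aᶜ, (p z - ρt z) ∂ν| ≤ ∫ z in Aᶜ, |p z - ρt z| ∂ν :=
      abs_integral_le _ _
    have h4 : (∫ z in A, |p z - ρt z| ∂ν) + (∫ z in Aᶜ, |p z - ρt z| ∂ν) = L :=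
      integral_add_compl hA hint_absdiff
    have h5 : |∫ z in A, (p z - ρt z) ∂ν| = |∫ z in Aᶜ, (p z - ρt z) ∂ν| := by
      rw [show (∫ z in A, (p z - ρt z) ∂ν) = -(∫ z in Aᶜ, (p z - ρt z) ∂ν) by linarith,
        abs_neg]
    linarith
  have hTle : tvDist μ μt ≤ L / 2 := by
    unfold tvDist
    exact ciSup_le hptA
  have hT0 : 0 ≤ tvDist μ μt := by
    have hbdd : BddAbove (Set.range (fun A : {A : Set (Fin d → ℝ) // MeasurableSet A} =>
        |(μ A.1).toReal - (μt A.1).toReal|)) := by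
      refine ⟨L/2, ?_⟩
      rintro x ⟨A, rfl⟩
      exact hptA A
    have h1 := le_ciSup hbdd (⟨∅, MeasurableSet.empty⟩ : {A : Set (Fin d → ℝ) // MeasurableSet A})
    unfold tvDist
    simpa using h1
  -- Cauchy-Schwarz / scalar Pinsker
  set f := fun z => Real.sqrt ((2/3) * (p z + 2 * ρt z)) with hfdef
  set g := fun z => Real.sqrt (p z * Real.log (p z / ρt z) - p z + ρt z) with hgdef
  have hf_meas : Measurable f :=
    ((hp_meas.add (hρt_meas.const_mul 2)).const_mul (2/3)).sqrt
  have hg_meas : Measurable g :=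
    (((hp_meas.mul ((hp_meas.div hρt_meas).log)).sub hp_meas).add hρt_meas).sqrt
  have hfg_pt : ∀ᵐ z ∂ν, |p z - ρt z| ≤ f z * g z := by
    filter_upwards [hρt_pos, hp_pos] with z h1 h2
    have hu : 0 ≤ (2/3) * (p z + 2 * ρt z) := by nlinarith
    have hple := pinsker_point h2 h1
    calc |p z - ρt z| = Real.sqrt ((p z - ρt z)^2) := (Real.sqrt_sq_eq_abs _).symm
      _ ≤ Real.sqrt ((2/3) * (p z + 2 * ρt z) * (p z * Real.log (p z / ρt z) - p z + ρt z)) :=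
          Real.sqrt_le_sqrt hple
      _ = f z * g z := Real.sqrt_mul hu _
  have hf2_ae : (fun z => (2/3) * (p z + 2 * ρt z)) =ᵐ[ν] (fun z => f z ^ 2) := by
    filter_upwards [hρt_pos, hp_pos] with z h1 h2
    have hx : 0 ≤ (2/3) * (p z + 2 * ρt z) :=
      mul_nonneg (by norm_num) (by linarith)
    exact (Real.sq_sqrt hx).symm
  have hg2_ae : (fun z => p z * Real.log (p z / ρt z) - p z + ρt z) =ᵐ[ν]
      (fun z => g z ^ 2) := by
    filter_upwards [hρt_pos, hp_pos] with z h1 h2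
    exact (Real.sq_sqrt (klterm_nonneg' h2 h1)).symm
  have hint_u : Integrable (fun z => (2/3) * (p z + 2 * ρt z)) ν :=
    (hp_int.add (hρt_int.const_mul 2)).const_mul (2/3)
  have hint_v : Integrable (fun z => p z * Real.log (p z / ρt z) - p z + ρt z) ν :=
    (hint_plog.sub hp_int).add hρt_int
  have hf2_int : Integrable (fun z => f z ^ 2) ν := hint_u.congr hf2_ae
  have hg2_int : Integrable (fun z => g z ^ 2) ν := hint_v.congr hg2_ae
  have hCS := integral_CS (f := f) (g := g)
    (Filter.Eventually.of_forall fun z => Real.sqrt_nonneg _)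
    hf_meas.aestronglyMeasurable hg_meas.aestronglyMeasurable hf2_int hg2_int
  have hfg_int : Integrable (fun z => f z * g z) ν := by
    apply Integrable.mono' ((hf2_int.add hg2_int).div_const 2)
      ((hf_meas.mul hg_meas).aestronglyMeasurable)
    refine Filter.Eventually.of_forall fun z => ?_
    rw [Real.norm_eq_abs, Pi.mul_apply, abs_mul, abs_of_nonneg (Real.sqrt_nonneg _),
      abs_of_nonneg (Real.sqrt_nonneg _)]
    exact amgm (f z) (g z)
  have hLle : L ≤ ∫ z, f z * g z ∂ν := integral_mono_ae hint_absdiff hfg_int hfg_pt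
  have hintf2 : ∫ z, f z ^ 2 ∂ν = 2 := by
    rw [← integral_congr_ae hf2_ae, integral_const_mul,
      integral_add hp_int (hρt_int.const_mul 2), integral_const_mul, hp_one, hρt_one]
    norm_num
  have hintg2 : ∫ z, g z ^ 2 ∂ν = ∫ z, p z * Real.log (p z / ρt z) ∂ν := by
    have hiS : Integrable (fun z => p z * Real.log (p z / ρt z) - p z) ν :=
      hint_plog.sub hp_int
    rw [← integral_congr_ae hg2_ae, integral_add hiS hρt_int,
      integral_sub hint_plog hp_int, hp_one, hρt_one]
    ring
  have hPinsker : 2 * (tvDist μ μt)^2 ≤ -(η * (∫ z, p z * h z ∂ν)) - Real.log Zh := by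
    rw [← hKLmu]
    have h1 : (tvDist μ μt)^2 ≤ (L/2)^2 := pow_le_pow_left₀ hT0 hTle 2
    have h2 : L^2 ≤ (∫ z, f z * g z ∂ν)^2 := pow_le_pow_left₀ hL0 hLle 2
    rw [hintf2, hintg2] at hCS
    linarith [h1, h2, hCS]
  -- conclusion
  rw [hμint, hμsint, hI2]
  exact final_arith η _ _ _ _ _ _ _ _ _ hF4 hlin hPinsker


end

end Paper
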